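/- For every even n there exists a 3-regular graph on 2n vertices having exactly 2^(n/2)+1 perfect matchings, one of which is edge-disjoint from all the others. -/

import Mathlib

open SimpleGraph

namespace Stmt2Aux

/-! ### Generic transport lemmas along a graph isomorphism -/

variable {V W : Type*} {G : SimpleGraph V} {G' : SimpleGraph W}

lemma iso_ncard_neighborSet (φ : G ≃g G') (w : V) :
    (G'.neighborSet (φ w)).ncard = (G.neighborSet w).ncard := by
  rw [← Nat.card_coe_set_eq, ← Nat.card_coe_set_eq]
  exact Nat.card_congr (φ.mapNeighborSet w).symm

lemma map_adj_iff (φ : G ≃g G') (M : G.Subgraph) (u v : W) :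
    (M.map φ.toHom).Adj u v ↔ M.Adj (φ.symm u) (φ.symm v) := by
  constructor
  · rintro ⟨a, b, hab, ha, hb⟩
    simpa [← ha, ← hb] using hab
  · intro h
    exact ⟨φ.symm u, φ.symm v, h, by simp, by simp⟩

lemma map_isPerfectMatching (φ : G ≃g G') {M : G.Subgraph} (hM : M.IsPerfectMatching) :
    (M.map φ.toHom).IsPerfectMatching := by
  rw [Subgraph.isPerfectMatching_iff] at hM ⊢
  intro v
  obtain ⟨w, hw, huniq⟩ := hM (φ.symm v)
  refine ⟨φ w, ?_, ?_⟩
  · show (M.map φ.toHom).Adj v (φ w)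
    rw [map_adj_iff]
    simpa using hw
  · intro y hy
    replace hy : (M.map φ.toHom).Adj v y := hy
    rw [map_adj_iff] at hy
    have := huniq _ hy
    have : φ (φ.symm y) = φ w := congrArg φ this
    simpa using this

lemma map_leftInverse (φ : G ≃g G') (M : G.Subgraph) :
    (M.map φ.toHom).map φ.symm.toHom = M := by
  rw [← Subgraph.map_comp]
  have : φ.symm.toHom.comp φ.toHom = Hom.id := by
    ext v
    simp
  rw [this, Subgraph.map_id]

lemma map_injective (φ : G ≃g G') :
    Function.Injective (Subgraph.map φ.toHom : G.Subgraph → G'.Subgraph) := by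
  intro M N h
  have := congrArg (Subgraph.map φ.symm.toHom) h
  rwa [map_leftInverse, map_leftInverse] at this

lemma pmSet_eq_image (φ : G ≃g G') :
    {M : G'.Subgraph | M.IsPerfectMatching} =
      (Subgraph.map φ.toHom) '' {M : G.Subgraph | M.IsPerfectMatching} := by
  ext M'
  constructor
  · intro hM'
    refine ⟨M'.map φ.symm.toHom, map_isPerfectMatching φ.symm hM', ?_⟩
    have := map_leftInverse φ.symm M'
    simpa using this
  · rintro ⟨M, hM, rfl⟩
    exact map_isPerfectMatching φ hM

lemma edgeSet_inter_empty {M M' : G.Subgraph}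
    (h : ∀ u v, M.Adj u v → ¬ M'.Adj u v) : M.edgeSet ∩ M'.edgeSet = ∅ := by
  ext e
  induction e with
  | h u v =>
    simp only [Set.mem_inter_iff, Subgraph.mem_edgeSet, Set.mem_empty_iff_false, iff_false,
      not_and]
    exact h u v

/-! ### The concrete graph -/

variable (k : ℕ) [NeZero k]

abbrev Vk := Fin k × Fin 4

def rel : Vk k → Vk k → Prop := fun u v =>
  (u.1 = v.1 ∧ ¬(u.2 = 1 ∧ v.2 = 3) ∧ ¬(u.2 = 3 ∧ v.2 = 1)) ∨
    (v.1 = u.1 + 1 ∧ u.2 = 1 ∧ v.2 = 3)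

def H : SimpleGraph (Vk k) := SimpleGraph.fromRel (rel k)

variable {k}

lemma adj_in (i : Fin k) {a b : Fin 4} (hab : a ≠ b)
    (h13 : ¬(a = 1 ∧ b = 3)) (h31 : ¬(a = 3 ∧ b = 1)) : (H k).Adj (i, a) (i, b) := by
  refine ⟨by simp [Prod.ext_iff, hab], Or.inl ?_⟩
  exact Or.inl ⟨rfl, by simpa using h13, by simpa using h31⟩

lemma adj01 (i : Fin k) : (H k).Adj (i, 0) (i, 1) := adj_in i (by decide) (by decide) (by decide)
lemma adj02 (i : Fin k) : (H k).Adj (i, 0) (i, 2) := adj_in i (by decide) (by decide) (by decide)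
lemma adj03 (i : Fin k) : (H k).Adj (i, 0) (i, 3) := adj_in i (by decide) (by decide) (by decide)
lemma adj12 (i : Fin k) : (H k).Adj (i, 1) (i, 2) := adj_in i (by decide) (by decide) (by decide)
lemma adj23 (i : Fin k) : (H k).Adj (i, 2) (i, 3) := adj_in i (by decide) (by decide) (by decide)

lemma adjcross (i : Fin k) : (H k).Adj (i, 1) (i + 1, 3) := by
  refine ⟨?_, Or.inl (Or.inr ⟨rfl, rfl, rfl⟩)⟩
  simp [Prod.ext_iff]

lemma adj0_cases {i : Fin k} {w : Vk k} (h : (H k).Adj (i, 0) w) :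
    w = (i, 1) ∨ w = (i, 2) ∨ w = (i, 3) := by
  obtain ⟨i', j'⟩ := w
  obtain ⟨hne, h | h⟩ := h <;> rw [rel] at h <;>
    · simp only [Prod.ext_iff] at hne ⊢
      fin_cases j' <;> simp_all

lemma adj2_cases {i : Fin k} {w : Vk k} (h : (H k).Adj (i, 2) w) :
    w = (i, 0) ∨ w = (i, 1) ∨ w = (i, 3) := by
  obtain ⟨i', j'⟩ := w
  obtain ⟨hne, h | h⟩ := h <;> rw [rel] at h <;>
    · simp only [Prod.ext_iff] at hne ⊢
      fin_cases j' <;> simp_all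

lemma adj1_cases {i : Fin k} {w : Vk k} (h : (H k).Adj (i, 1) w) :
    w = (i, 0) ∨ w = (i, 2) ∨ w = (i + 1, 3) := by
  obtain ⟨i', j'⟩ := w
  obtain ⟨hne, h | h⟩ := h <;> rw [rel] at h <;>
    · simp only [Prod.ext_iff] at hne ⊢
      fin_cases j' <;> simp_all

lemma adj3_cases {i : Fin k} {w : Vk k} (h : (H k).Adj (i, 3) w) :
    w = (i, 0) ∨ w = (i, 2) ∨ w = (i - 1, 1) := by
  obtain ⟨i', j'⟩ := w
  obtain ⟨hne, h | h⟩ := h <;> rw [rel] at h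
  · simp only [Prod.ext_iff] at hne ⊢
    fin_cases j' <;> simp_all
  · simp only [Prod.ext_iff] at hne ⊢
    fin_cases j' <;> simp_all

/-! ### Perfect matchings from involutions -/

def pmOfInv (G : SimpleGraph V) (f : V → V) (hinv : ∀ v, f (f v) = v)
    (hadj : ∀ v, G.Adj v (f v)) : G.Subgraph where
  verts := Set.univ
  Adj u v := f u = v
  adj_sub := by rintro u v rfl; exact hadj u
  edge_vert := fun _ => Set.mem_univ _
  symm := ⟨by rintro u v rfl; exact hinv u⟩

lemma pmOfInv_isPM (G : SimpleGraph V) (f : V → V) (hinv : ∀ v, f (f v) = v)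
    (hadj : ∀ v, G.Adj v (f v)) : (pmOfInv G f hinv hadj).IsPerfectMatching :=
  ⟨fun v _ => ⟨f v, rfl, fun y hy => Eq.symm hy⟩, fun v => Set.mem_univ v⟩

lemma pmOfInv_adj (G : SimpleGraph V) (f : V → V) (hinv : ∀ v, f (f v) = v)
    (hadj : ∀ v, G.Adj v (f v)) (u v : V) :
    (pmOfInv G f hinv hadj).Adj u v ↔ f u = v := Iff.rfl

lemma pm_eq_of_le {M P : G.Subgraph} (hM : M.IsPerfectMatching) (hP : P.IsPerfectMatching)
    (h : ∀ u v, M.Adj u v → P.Adj u v) : P = M := by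
  have hverts : P.verts = M.verts := by
    ext x; simp [hP.2 x, hM.2 x]
  refine Subgraph.ext hverts ?_
  funext u v
  apply propext
  constructor
  · intro hpu
    obtain ⟨w, hw, -⟩ := Subgraph.isPerfectMatching_iff.mp hM u
    have := (Subgraph.isPerfectMatching_iff.mp hP u).unique hpu (h u w hw)
    exact this ▸ hw
  · exact h u v

/-! ### The two kinds of matchings in `H k` -/

variable (k) in
def f0 : Vk k → Vk k := fun v =>
  if v.2 = 0 then (v.1, 2) else if v.2 = 1 then (v.1 + 1, 3)
  else if v.2 = 2 then (v.1, 0) else (v.1 - 1, 1)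

variable (k) in
def f1 (c : Fin k → Bool) : Vk k → Vk k := fun v =>
  if v.2 = 0 then (v.1, if c v.1 then 1 else 3)
  else if v.2 = 1 then (v.1, if c v.1 then 0 else 2)
  else if v.2 = 2 then (v.1, if c v.1 then 3 else 1)
  else (v.1, if c v.1 then 2 else 0)

lemma f0_inv : ∀ v, f0 k (f0 k v) = v := by
  rintro ⟨i, j⟩
  fin_cases j <;> simp [f0, add_sub_cancel_right, sub_add_cancel]

lemma f0_adj : ∀ v, (H k).Adj v (f0 k v) := by
  rintro ⟨i, j⟩
  fin_cases j <;> simp only [f0] <;> norm_num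
  · exact adj02 i
  · exact adjcross i
  · exact (adj02 i).symm
  · have := (adjcross (i - 1)).symm
    rwa [sub_add_cancel] at this

lemma f1_inv (c : Fin k → Bool) : ∀ v, f1 k c (f1 k c v) = v := by
  rintro ⟨i, j⟩
  fin_cases j <;> cases hc : c i <;> simp [f1, hc]

lemma f1_adj (c : Fin k → Bool) : ∀ v, (H k).Adj v (f1 k c v) := by
  rintro ⟨i, j⟩
  fin_cases j <;> cases hc : c i <;> simp only [f1, hc] <;> norm_num
  · exact adj03 i
  · exact adj01 i
  · exact adj12 i
  · exact (adj01 i).symm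
  · exact (adj12 i).symm
  · exact adj23 i
  · exact (adj03 i).symm
  · exact (adj23 i).symm

variable (k) in
def M0 : (H k).Subgraph := pmOfInv (H k) (f0 k) f0_inv f0_adj

variable (k) in
def Nc (c : Fin k → Bool) : (H k).Subgraph := pmOfInv (H k) (f1 k c) (f1_inv c) (f1_adj c)

lemma M0_isPM : (M0 k).IsPerfectMatching := pmOfInv_isPM _ _ _ _

lemma Nc_isPM (c : Fin k → Bool) : (Nc k c).IsPerfectMatching := pmOfInv_isPM _ _ _ _

lemma M0_adj {u v : Vk k} : (M0 k).Adj u v ↔ f0 k u = v := Iff.rfl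

lemma Nc_adj {c : Fin k → Bool} {u v : Vk k} : (Nc k c).Adj u v ↔ f1 k c u = v := Iff.rfl

/-! ### Classification of perfect matchings -/

lemma uniqP {P : (H k).Subgraph} (hP : ∀ v, ∃! w, P.Adj v w) {u a b : Vk k}
    (h1 : P.Adj u a) (h2 : P.Adj u b) : a = b := ((hP u).unique h1 h2)

lemma diag_step {P : (H k).Subgraph} (hP : ∀ v, ∃! w, P.Adj v w) (i : Fin k)
    (h : P.Adj (i, 0) (i, 2)) :
    P.Adj (i, 1) (i + 1, 3) ∧ P.Adj (i + 1, 0) (i + 1, 2) := by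
  obtain ⟨w, hw, -⟩ := hP (i, 1)
  have hcr : P.Adj (i, 1) (i + 1, 3) := by
    rcases adj1_cases (P.adj_sub hw) with rfl | rfl | rfl
    · exact absurd (uniqP hP h hw.symm) (by simp [Prod.ext_iff])
    · exact absurd (uniqP hP h.symm hw.symm) (by simp [Prod.ext_iff])
    · exact hw
  refine ⟨hcr, ?_⟩
  obtain ⟨x, hx, -⟩ := hP (i + 1, 0)
  rcases adj0_cases (P.adj_sub hx) with rfl | rfl | rfl
  · -- x = (i+1,1) : then (i+1,2) has no partner
    exfalso
    obtain ⟨y, hy, -⟩ := hP (i + 1, 2)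
    rcases adj2_cases (P.adj_sub hy) with rfl | rfl | rfl
    · exact absurd (uniqP hP hy.symm hx) (by simp [Prod.ext_iff])
    · exact absurd (uniqP hP hy.symm hx.symm) (by simp [Prod.ext_iff])
    · exact absurd (uniqP hP hy.symm hcr.symm) (by simp [Prod.ext_iff])
  · exact hx
  · exact absurd (uniqP hP hx.symm hcr.symm) (by simp [Prod.ext_iff])

open Fin.NatCast in
lemma diag_all {P : (H k).Subgraph} (hP : ∀ v, ∃! w, P.Adj v w) {i₀ : Fin k}
    (h : P.Adj (i₀, 0) (i₀, 2)) :
    ∀ i : Fin k, P.Adj (i, 0) (i, 2) ∧ P.Adj (i, 1) (i + 1, 3) := by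
  have key : ∀ m : ℕ, P.Adj (i₀ + (m : Fin k), 0) (i₀ + (m : Fin k), 2) := by
    intro m
    induction m with
    | zero => simpa using h
    | succ m ih =>
      have h2 := (diag_step hP _ ih).2
      have hcast : ((m + 1 : ℕ) : Fin k) = (m : Fin k) + 1 := by push_cast; ring
      rw [hcast, ← add_assoc]
      exact h2
  intro i
  have hi : i = i₀ + ((i - i₀).val : Fin k) := by
    rw [Fin.cast_val_eq_self]
    abel
  have hd : P.Adj (i, 0) (i, 2) := by rw [hi]; exact key _
  exact ⟨hd, (diag_step hP i hd).1⟩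

open Classical in
lemma pm_classify {P : (H k).Subgraph} (hpm : P.IsPerfectMatching) :
    P = M0 k ∨ ∃ c, P = Nc k c := by
  have hP := Subgraph.isPerfectMatching_iff.mp hpm
  by_cases hdiag : ∃ i : Fin k, P.Adj (i, 0) (i, 2)
  · left
    obtain ⟨i₀, h0⟩ := hdiag
    have hall := diag_all hP h0
    refine pm_eq_of_le M0_isPM hpm ?_
    rintro ⟨i, j⟩ v hv
    rw [M0_adj] at hv
    subst hv
    fin_cases j <;> simp only [f0] <;> norm_num
    · exact (hall i).1
    · exact (hall i).2
    · exact ((hall i).1).symm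
    · have := ((hall (i - 1)).2).symm
      rwa [sub_add_cancel] at this
  · right
    push_neg at hdiag
    have hnocross : ∀ i : Fin k, ¬ P.Adj (i, 1) (i + 1, 3) := by
      intro i hcr
      apply hdiag i
      obtain ⟨w, hw, -⟩ := hP (i, 0)
      rcases adj0_cases (P.adj_sub hw) with rfl | rfl | rfl
      · exact absurd (uniqP hP hw.symm hcr) (by simp [Prod.ext_iff])
      · exact hw
      · exfalso
        obtain ⟨x, hx, -⟩ := hP (i, 2)
        rcases adj2_cases (P.adj_sub hx) with rfl | rfl | rfl
        · exact absurd (uniqP hP hx.symm hw) (by simp [Prod.ext_iff])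
        · exact absurd (uniqP hP hx.symm hcr) (by simp [Prod.ext_iff])
        · exact absurd (uniqP hP hx.symm hw.symm) (by simp [Prod.ext_iff])
    set c : Fin k → Bool := fun i => decide (P.Adj (i, 0) (i, 1)) with hc
    have main : ∀ i : Fin k, P.Adj (i, 0) (i, if c i then 1 else 3) := by
      intro i
      obtain ⟨w, hw, -⟩ := hP (i, 0)
      rcases adj0_cases (P.adj_sub hw) with rfl | rfl | rfl
      · have : c i = true := by simp [hc, hw]
        rw [this]; exact hw
      · exact absurd hw (hdiag i)
      · have : c i = false := by
          simp only [hc, decide_eq_false_iff_not]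
          intro h01
          exact absurd (uniqP hP h01 hw) (by simp [Prod.ext_iff])
        rw [this]; exact hw
    have main2 : ∀ i : Fin k, P.Adj (i, 2) (i, if c i then 3 else 1) := by
      intro i
      obtain ⟨x, hx, -⟩ := hP (i, 2)
      rcases adj2_cases (P.adj_sub hx) with rfl | rfl | rfl
      · exact absurd hx.symm (hdiag i)
      · have hcf : c i = false := by
          simp only [hc, decide_eq_false_iff_not]
          intro h01
          exact absurd (uniqP hP h01.symm hx.symm) (by simp [Prod.ext_iff])
        rw [hcf]; exact hx
      · have hct : c i = true := by
          cases hcc : c i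
          · have h03 := main i
            rw [hcc] at h03
            simp only [Bool.false_eq_true, if_false] at h03
            exact absurd (uniqP hP hx.symm h03.symm) (by simp [Prod.ext_iff])
          · rfl
        rw [hct]; exact hx
    refine ⟨c, pm_eq_of_le (Nc_isPM c) hpm ?_⟩
    rintro ⟨i, j⟩ v hv
    rw [Nc_adj] at hv
    subst hv
    fin_cases j <;> simp only [f1] <;> norm_num
    · exact main i
    · cases hcc : c i <;> simp only [hcc, if_true, if_false, Bool.false_eq_true]
      · have := main2 i; rw [hcc] at this; simpa using this.symm
      · have := main i; rw [hcc] at this; simpa using this.symm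
    · exact main2 i
    · cases hcc : c i <;> simp only [hcc, if_true, if_false, Bool.false_eq_true]
      · have := main i; rw [hcc] at this; simpa using this.symm
      · have := main2 i; rw [hcc] at this; simpa using this.symm

/-! ### Regularity -/

lemma nbhd_ncard (v : Vk k) : ((H k).neighborSet v).ncard = 3 := by
  obtain ⟨i, j⟩ := v
  fin_cases j
  · show ((H k).neighborSet (i, (0 : Fin 4))).ncard = 3
    have h : (H k).neighborSet (i, (0 : Fin 4)) = {(i, 1), (i, 2), (i, 3)} := by
      ext w
      constructor
      · intro hw
        rcases adj0_cases hw with rfl | rfl | rfl <;> simp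
      · intro hw
        rcases hw with rfl | rfl | rfl
        exacts [adj01 i, adj02 i, adj03 i]
    rw [h, Set.ncard_insert_of_notMem (by simp [Prod.ext_iff]),
      Set.ncard_pair (by simp [Prod.ext_iff])]
  · show ((H k).neighborSet (i, (1 : Fin 4))).ncard = 3
    have h : (H k).neighborSet (i, (1 : Fin 4)) = {(i, 0), (i, 2), (i + 1, 3)} := by
      ext w
      constructor
      · intro hw
        rcases adj1_cases hw with rfl | rfl | rfl <;> simp
      · intro hw
        rcases hw with rfl | rfl | rfl
        exacts [(adj01 i).symm, adj12 i, adjcross i]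
    rw [h, Set.ncard_insert_of_notMem (by simp [Prod.ext_iff]),
      Set.ncard_pair (by simp [Prod.ext_iff])]
  · show ((H k).neighborSet (i, (2 : Fin 4))).ncard = 3
    have h : (H k).neighborSet (i, (2 : Fin 4)) = {(i, 0), (i, 1), (i, 3)} := by
      ext w
      constructor
      · intro hw
        rcases adj2_cases hw with rfl | rfl | rfl <;> simp
      · intro hw
        rcases hw with rfl | rfl | rfl
        exacts [(adj02 i).symm, (adj12 i).symm, adj23 i]
    rw [h, Set.ncard_insert_of_notMem (by simp [Prod.ext_iff]),
      Set.ncard_pair (by simp [Prod.ext_iff])]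
  · show ((H k).neighborSet (i, (3 : Fin 4))).ncard = 3
    have h : (H k).neighborSet (i, (3 : Fin 4)) = {(i, 0), (i, 2), (i - 1, 1)} := by
      ext w
      constructor
      · intro hw
        rcases adj3_cases hw with rfl | rfl | rfl <;> simp
      · intro hw
        rcases hw with rfl | rfl | rfl
        · exact (adj03 i).symm
        · exact (adj23 i).symm
        · have := (adjcross (i - 1)).symm
          rwa [sub_add_cancel] at this
    rw [h, Set.ncard_insert_of_notMem (by simp [Prod.ext_iff]),
      Set.ncard_pair (by simp [Prod.ext_iff])]

/-! ### Counting -/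

lemma pmSet_eq : {P : (H k).Subgraph | P.IsPerfectMatching} = insert (M0 k) (Set.range (Nc k)) := by
  ext P
  simp only [Set.mem_setOf_eq, Set.mem_insert_iff, Set.mem_range]
  constructor
  · intro h
    rcases pm_classify h with h | ⟨c, h⟩
    · exact Or.inl h
    · exact Or.inr ⟨c, h.symm⟩
  · rintro (rfl | ⟨c, rfl⟩)
    exacts [M0_isPM, Nc_isPM c]

lemma Nc_inj : Function.Injective (Nc k) := by
  intro c c' h
  funext i
  have h1 : (Nc k c).Adj (i, 0) (i, if c i then 1 else 3) := by
    rw [Nc_adj, f1]; norm_num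
  rw [h] at h1
  rw [Nc_adj, f1] at h1
  norm_num at h1
  cases hc : c i <;> cases hc' : c' i <;> rw [hc] at h1 <;> rw [hc'] at h1 <;>
    simp_all [Prod.ext_iff]

lemma M0_not_mem : M0 k ∉ Set.range (Nc k) := by
  rintro ⟨c, hcEq⟩
  have h1 : (M0 k).Adj (0, 0) (0, 2) := by
    rw [M0_adj, f0]; norm_num
  rw [← hcEq, Nc_adj, f1] at h1
  norm_num at h1
  cases hc : c 0 <;> rw [hc] at h1 <;> simp_all [Prod.ext_iff]

lemma pm_count : {P : (H k).Subgraph | P.IsPerfectMatching}.ncard = 2 ^ k + 1 := by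
  rw [pmSet_eq, Set.ncard_insert_of_notMem M0_not_mem (Set.finite_range _),
    ← Set.image_univ, Set.ncard_image_of_injective _ Nc_inj, Set.ncard_univ,
    Nat.card_eq_fintype_card]
  simp

/-! ### Disjointness -/

lemma M0_disj (c : Fin k → Bool) (u v : Vk k) : (M0 k).Adj u v → ¬ (Nc k c).Adj u v := by
  obtain ⟨i, j⟩ := u
  intro h h'
  rw [M0_adj] at h
  rw [Nc_adj] at h'
  rw [← h'] at h
  fin_cases j <;> cases hc : c i <;> rw [f0, f1] at h <;> norm_num at h <;>
    rw [hc] at h <;> simp_all [Prod.ext_iff]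

end Stmt2Aux

open Stmt2Aux in
/-- For every even `n > 0` there is a 3-regular graph on `2n` vertices with exactly
`2^(n/2) + 1` perfect matchings, one of which is disjoint from all the others. -/
theorem stmt_2 (n : ℕ) (hn : 0 < n) (heven : Even n) :
    ∃ G : SimpleGraph (Fin (2 * n)),
      (∀ v, (G.neighborSet v).ncard = 3) ∧
      {M : G.Subgraph | M.IsPerfectMatching}.ncard = 2 ^ (n / 2) + 1 ∧
      ∃ M : G.Subgraph, M.IsPerfectMatching ∧
        ∀ M' : G.Subgraph, M'.IsPerfectMatching → M' ≠ M → M.edgeSet ∩ M'.edgeSet = ∅ := by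
  obtain ⟨k, rfl⟩ := heven
  haveI : NeZero k := ⟨by omega⟩
  have e : Vk k ≃ Fin (2 * (k + k)) := finProdFinEquiv.trans (finCongr (by omega))
  let φ0 := SimpleGraph.Iso.comap e.symm (H k)
  refine ⟨(H k).comap e.symm, ?_, ?_, ?_⟩
  · intro v
    have h := iso_ncard_neighborSet φ0.symm (φ0 v)
    rw [φ0.symm_apply_apply] at h
    rw [h, nbhd_ncard]
  · have hk2 : (k + k) / 2 = k := by omega
    rw [hk2, pmSet_eq_image φ0.symm,
      Set.ncard_image_of_injective _ (map_injective φ0.symm), pm_count]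
  · refine ⟨(M0 k).map φ0.symm.toHom, map_isPerfectMatching φ0.symm M0_isPM, ?_⟩
    intro M' hM' hne
    have hM'0 : (M'.map φ0.toHom).IsPerfectMatching := map_isPerfectMatching φ0 hM'
    have hne0 : M'.map φ0.toHom ≠ M0 k := by
      intro hEq
      apply hne
      have := congrArg (SimpleGraph.Subgraph.map φ0.symm.toHom) hEq
      rwa [map_leftInverse] at this
    rcases pm_classify hM'0 with h | ⟨c, hc⟩
    · exact absurd h hne0
    · apply edgeSet_inter_empty
      intro u v hMe hM'e
      rw [map_adj_iff] at hMe
      have hM'' : (Nc k c).Adj (φ0 u) (φ0 v) := by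
        rw [← hc]
        exact ⟨u, v, hM'e, rfl, rfl⟩
      have hM0 : (M0 k).Adj (φ0 u) (φ0 v) := by simpa using hMe
      exact M0_disj c _ _ hM0 hM''
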